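/- Let α, β be nonzero reals with α + β ≠ 0 and set α₀ = (α+β)/2. For commuting positive definite Σ and symmetric X (diagonal), the curve γ(t) = (Σ^{α₀} + t·α₀·Σ^{α₀−1}X)^{1/α₀} satisfies (1/α)·γ(t)^{1−α}·(γ^α)''(t) + (1/β)·γ(t)^{1−β}·(γ^β)''(t) = 0 for all t near 0. -/
import Mathlib

open Real Filter

lemma deriv2_affine_rpow (c₀ c₁ p t : ℝ) (ht : 0 < c₀ + t * c₁) :
    deriv (deriv (fun s => (c₀ + s * c₁) ^ p)) t
      = p * (p - 1) * (c₀ + t * c₁) ^ (p - 2) * c₁ ^ 2 := by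
  have hopen : IsOpen {s : ℝ | 0 < c₀ + s * c₁} :=
    isOpen_lt continuous_const (by fun_prop)
  have haff : ∀ s : ℝ, HasDerivAt (fun s : ℝ => c₀ + s * c₁) c₁ s := by
    intro s
    simpa using ((hasDerivAt_id s).mul_const c₁).const_add c₀
  have key : ∀ s : ℝ, 0 < c₀ + s * c₁ →
      HasDerivAt (fun s => (c₀ + s * c₁) ^ p) (c₁ * p * (c₀ + s * c₁) ^ (p - 1)) s :=
    fun s hs => (haff s).rpow_const (Or.inl hs.ne')
  have hev : deriv (fun s => (c₀ + s * c₁) ^ p)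
      =ᶠ[nhds t] fun s => c₁ * p * (c₀ + s * c₁) ^ (p - 1) := by
    filter_upwards [hopen.mem_nhds ht] with s hs
    exact (key s hs).deriv
  rw [hev.deriv_eq]
  have h2 : HasDerivAt (fun s => c₁ * p * (c₀ + s * c₁) ^ (p - 1))
      (c₁ * p * (c₁ * (p - 1) * (c₀ + t * c₁) ^ (p - 1 - 1))) t := by
    exact (((haff t).rpow_const (Or.inl ht.ne'))).const_mul (c₁ * p)
  rw [h2.deriv, show p - 1 - 1 = p - 2 by ring]
  ring

theorem mpe_geodesic_equation (α β : ℝ) (hα : α ≠ 0) (hβ : β ≠ 0) (hαβ : α + β ≠ 0)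
    (d x : ℝ) (hd : 0 < d) :
    let α₀ : ℝ := (α + β) / 2
    let γ : ℝ → ℝ := fun t => (d ^ α₀ + t * α₀ * d ^ (α₀ - 1) * x) ^ (1 / α₀)
    ∀ t : ℝ, 0 < 1 + t * α₀ * d⁻¹ * x →
      (1 / α) * γ t ^ (1 - α) * deriv (deriv (fun s => γ s ^ α)) t +
        (1 / β) * γ t ^ (1 - β) * deriv (deriv (fun s => γ s ^ β)) t = 0 := by
  intro α₀ γ t ht
  have hα₀ : α₀ ≠ 0 := div_ne_zero hαβ two_ne_zero
  set c₀ : ℝ := d ^ α₀ with hc₀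
  set c₁ : ℝ := α₀ * d ^ (α₀ - 1) * x with hc₁
  have hdm : d ^ (α₀ - 1) = d ^ α₀ * d⁻¹ := by
    rw [Real.rpow_sub hd, Real.rpow_one, div_eq_mul_inv]
  have haffeq : ∀ s : ℝ, d ^ α₀ + s * α₀ * d ^ (α₀ - 1) * x = c₀ + s * c₁ := by
    intro s; rw [hc₀, hc₁]; ring
  have hut : 0 < c₀ + t * c₁ := by
    rw [hc₀, hc₁, hdm]
    have : d ^ α₀ + t * (α₀ * (d ^ α₀ * d⁻¹) * x) = d ^ α₀ * (1 + t * α₀ * d⁻¹ * x) := by ring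
    rw [this]
    exact mul_pos (Real.rpow_pos_of_pos hd α₀) ht
  have hopen : IsOpen {s : ℝ | 0 < c₀ + s * c₁} :=
    isOpen_lt continuous_const (by fun_prop)
  have hγ : ∀ s : ℝ, 0 < c₀ + s * c₁ → ∀ p : ℝ, γ s ^ p = (c₀ + s * c₁) ^ (p / α₀) := by
    intro s hs p
    show ((d ^ α₀ + s * α₀ * d ^ (α₀ - 1) * x) ^ (1 / α₀)) ^ p = _
    rw [haffeq s, ← Real.rpow_mul hs.le, show 1 / α₀ * p = p / α₀ by ring]
  have key : ∀ p : ℝ, deriv (deriv (fun s => γ s ^ p)) t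
      = (p / α₀) * (p / α₀ - 1) * (c₀ + t * c₁) ^ (p / α₀ - 2) * c₁ ^ 2 := by
    intro p
    have hev : (fun s => γ s ^ p) =ᶠ[nhds t] fun s => (c₀ + s * c₁) ^ (p / α₀) := by
      filter_upwards [hopen.mem_nhds hut] with s hs
      exact hγ s hs p
    rw [hev.deriv.deriv_eq]
    exact deriv2_affine_rpow c₀ c₁ (p / α₀) t hut
  rw [key α, key β, hγ t hut (1 - α), hγ t hut (1 - β)]
  have e1 : (c₀ + t * c₁) ^ ((1 - α) / α₀) * (c₀ + t * c₁) ^ (α / α₀ - 2)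
      = (c₀ + t * c₁) ^ (1 / α₀ - 2) := by
    rw [← Real.rpow_add hut]; congr 1; ring
  have e2 : (c₀ + t * c₁) ^ ((1 - β) / α₀) * (c₀ + t * c₁) ^ (β / α₀ - 2)
      = (c₀ + t * c₁) ^ (1 / α₀ - 2) := by
    rw [← Real.rpow_add hut]; congr 1; ring
  have hcoef : (1 / α) * ((α / α₀) * (α / α₀ - 1)) + (1 / β) * ((β / α₀) * (β / α₀ - 1)) = 0 := by
    have h2 : α₀ = (α + β) / 2 := rfl
    rw [h2]
    field_simp
    ring
  linear_combination ((1 / α) * ((α / α₀) * (α / α₀ - 1)) * c₁ ^ 2) * e1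
    + ((1 / β) * ((β / α₀) * (β / α₀ - 1)) * c₁ ^ 2) * e2
    + ((c₀ + t * c₁) ^ (1 / α₀ - 2) * c₁ ^ 2) * hcoef
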